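/- Let (Ω, 𝔉, ℙ) be a probability space, K a positive integer, and η > 0. Let x = (x_k)_{k ≥ 1} and x' = (x'_k)_{k ≥ 1} be random sequences with values in [0,1] satisfying ∑_{k ≥ 1} x_k = ∑_{k ≥ 1} x'_k = 1 almost surely, and let U be a random variable uniformly distributed on [0,1] and independent of (x, x'). Define random positive integers c and c' by ∑_{k=1}^{c} x_k ≤ U < ∑_{k=1}^{c+1} x_k and ∑_{k=1}^{c'} x'_k ≤ U < ∑_{k=1}^{c'+1} x'_k. If ℙ[∃ k ≤ K with |x_k − x'_k| ≥ η/K²] ≤ η/K and ∑_{k > K} x_k ≤ η almost surely, then ℙ[c = c'] ≥ 1 − 6η. -/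

import Mathlib

open MeasureTheory

lemma stmt16_sum_Icc_one (f : ℕ → ℝ) : ∀ j, ∑ k ∈ Finset.Icc 1 j, f k = ∑ k ∈ Finset.range j, f (k + 1) := by
  intro j
  induction j with
  | zero => simp
  | succ n ih =>
    rw [Finset.sum_Icc_succ_top (by omega : 1 ≤ n + 1), Finset.sum_range_succ, ih]

lemma stmt16_band {Ω : Type*} [MeasurableSpace Ω] (P : Measure Ω) [IsProbabilityMeasure P]
    (U Y : Ω → ℝ) (hUm : Measurable U) (hYm : Measurable Y)
    (hU : Measure.map U P = volume.restrict (Set.Icc (0 : ℝ) 1))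
    (hind : ProbabilityTheory.IndepFun Y U P) (ε : ℝ) (hε : 0 ≤ ε) :
    P {ω | |U ω - Y ω| ≤ ε} ≤ ENNReal.ofReal (2 * ε) := by
  have hmap : Measure.map (fun ω => (Y ω, U ω)) P = (Measure.map Y P).prod (Measure.map U P) :=
    (ProbabilityTheory.indepFun_iff_map_prod_eq_prod_map_map hYm.aemeasurable hUm.aemeasurable).mp hind
  have hSm : MeasurableSet {p : ℝ × ℝ | |p.2 - p.1| ≤ ε} :=
    measurableSet_le (by fun_prop) measurable_const
  have h1 : P {ω | |U ω - Y ω| ≤ ε}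
      = Measure.map (fun ω => (Y ω, U ω)) P {p : ℝ × ℝ | |p.2 - p.1| ≤ ε} := by
    rw [Measure.map_apply (hYm.prodMk hUm) hSm]; rfl
  have hPY : IsProbabilityMeasure (Measure.map Y P) := Measure.isProbabilityMeasure_map hYm.aemeasurable
  rw [h1, hmap, Measure.prod_apply hSm]
  calc ∫⁻ y, Measure.map U P (Prod.mk y ⁻¹' {p : ℝ × ℝ | |p.2 - p.1| ≤ ε}) ∂(Measure.map Y P)
      ≤ ∫⁻ _, ENNReal.ofReal (2 * ε) ∂(Measure.map Y P) := by
        apply lintegral_mono; intro y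
        have hpre : Prod.mk y ⁻¹' {p : ℝ × ℝ | |p.2 - p.1| ≤ ε} = Set.Icc (y - ε) (y + ε) := by
          ext u
          simp only [Set.mem_preimage, Set.mem_setOf_eq, Set.mem_Icc, abs_le]
          constructor <;> rintro ⟨h1, h2⟩ <;> constructor <;> linarith
        simp only []
        show Measure.map U P (Prod.mk y ⁻¹' {p : ℝ × ℝ | |p.2 - p.1| ≤ ε}) ≤ _
        rw [hpre, hU]
        calc volume.restrict (Set.Icc (0:ℝ) 1) (Set.Icc (y - ε) (y + ε))
            ≤ volume (Set.Icc (y - ε) (y + ε)) := Measure.restrict_apply_le _ _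
          _ = ENNReal.ofReal (2 * ε) := by rw [Real.volume_Icc]; ring_nf
    _ = ENNReal.ofReal (2 * ε) := by simp

theorem stmt16 {Ω : Type*} [MeasurableSpace Ω]
    (P : Measure Ω) [IsProbabilityMeasure P]
    (K : ℕ) (hK : 1 ≤ K) (η : ℝ) (hη : 0 < η)
    (x x' : Ω → ℕ → ℝ) (U : Ω → ℝ) (c c' : Ω → ℕ)
    (hxm : Measurable x) (hx'm : Measurable x') (hUm : Measurable U)
    (hcm : Measurable c) (hc'm : Measurable c')
    (hx01 : ∀ᵐ ω ∂P, ∀ k : ℕ, 1 ≤ k → x ω k ∈ Set.Icc (0 : ℝ) 1)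
    (hx'01 : ∀ᵐ ω ∂P, ∀ k : ℕ, 1 ≤ k → x' ω k ∈ Set.Icc (0 : ℝ) 1)
    (hxs : ∀ᵐ ω ∂P, HasSum (fun k => x ω (k + 1)) 1)
    (hx's : ∀ᵐ ω ∂P, HasSum (fun k => x' ω (k + 1)) 1)
    (hU : Measure.map U P = volume.restrict (Set.Icc (0 : ℝ) 1))
    (hindep : ProbabilityTheory.IndepFun U (fun ω => (x ω, x' ω)) P)
    (hc : ∀ᵐ ω ∂P, 1 ≤ c ω ∧
      (∑ k ∈ Finset.Icc 1 (c ω), x ω k) ≤ U ω ∧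
      U ω < ∑ k ∈ Finset.Icc 1 (c ω + 1), x ω k)
    (hc' : ∀ᵐ ω ∂P, 1 ≤ c' ω ∧
      (∑ k ∈ Finset.Icc 1 (c' ω), x' ω k) ≤ U ω ∧
      U ω < ∑ k ∈ Finset.Icc 1 (c' ω + 1), x' ω k)
    (hclose : P {ω | ∃ k : ℕ, 1 ≤ k ∧ k ≤ K ∧ η / (K : ℝ) ^ 2 ≤ |x ω k - x' ω k|}
      ≤ ENNReal.ofReal (η / K))
    (htail : ∀ᵐ ω ∂P, (∑' k : ℕ, x ω (K + 1 + k)) ≤ η) :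
    ENNReal.ofReal (1 - 6 * η) ≤ P {ω | c ω = c' ω} := by
  have hK0 : (0 : ℝ) < K := by exact_mod_cast hK
  -- the three bad events
  set A : Set Ω := {ω | ∃ k : ℕ, 1 ≤ k ∧ k ≤ K ∧ η / (K : ℝ) ^ 2 ≤ |x ω k - x' ω k|} with hA
  set B : Set Ω := {ω | 1 - 2 * η ≤ U ω} with hBdef
  set C : Set Ω := ⋃ j ∈ Finset.Icc 2 K, {ω | |U ω - ∑ k ∈ Finset.Icc 1 j, x ω k| ≤ η / K}
    with hCdef
  set D : Set Ω := A ∪ B ∪ C with hDdef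
  -- a.e. inclusion of the disagreement event
  have hsub : {ω | c ω ≠ c' ω} ≤ᵐ[P] D := by
    filter_upwards [hx01, hx'01, hxs, hx's, hc, hc', htail] with ω h01 h01' hs hs' hcω hc'ω htω
    intro hne
    by_cases hAω : ω ∈ A
    · exact Or.inl (Or.inl hAω)
    simp only [hA, Set.mem_setOf_eq, not_exists, not_and, not_le] at hAω
    -- notation
    set Sx : ℕ → ℝ := fun j => ∑ k ∈ Finset.Icc 1 j, x ω k with hSx
    set Sx' : ℕ → ℝ := fun j => ∑ k ∈ Finset.Icc 1 j, x' ω k with hSx'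
    have hxnn : ∀ k ∈ Finset.Icc 1 K, (0:ℝ) ≤ x ω k := fun k hk =>
      (h01 k (Finset.mem_Icc.mp hk).1).1
    have hmono : ∀ a b : ℕ, a ≤ b → Sx a ≤ Sx b := by
      intro a b hab
      apply Finset.sum_le_sum_of_subset_of_nonneg (Finset.Icc_subset_Icc_right hab)
      intro k hk _
      exact (h01 k (Finset.mem_Icc.mp hk).1).1
    have hmono' : ∀ a b : ℕ, a ≤ b → Sx' a ≤ Sx' b := by
      intro a b hab
      apply Finset.sum_le_sum_of_subset_of_nonneg (Finset.Icc_subset_Icc_right hab)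
      intro k hk _
      exact (h01' k (Finset.mem_Icc.mp hk).1).1
    -- S_K ≥ 1 - η
    have hSK : 1 - η ≤ Sx K := by
      have hsum := hs.summable
      have h := Summable.sum_add_tsum_nat_add (f := fun k => x ω (k + 1)) K hsum
      rw [hs.tsum_eq] at h
      have hrange : ∑ i ∈ Finset.range K, x ω (i + 1) = Sx K := (stmt16_sum_Icc_one (x ω) K).symm
      have htl : (∑' i : ℕ, x ω (i + K + 1)) = ∑' k : ℕ, x ω (K + 1 + k) := by
        apply tsum_congr; intro i; congr 1; omega
      rw [hrange, htl] at h
      linarith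
    -- closeness of partial sums
    have hdiff : ∀ j : ℕ, j ≤ K → |Sx j - Sx' j| ≤ η / K := by
      intro j hj
      have h1 : |Sx j - Sx' j| ≤ ∑ k ∈ Finset.Icc 1 j, |x ω k - x' ω k| := by
        rw [hSx, hSx', ← Finset.sum_sub_distrib]
        exact Finset.abs_sum_le_sum_abs _ _
      have h2 : ∑ k ∈ Finset.Icc 1 j, |x ω k - x' ω k|
          ≤ ∑ _k ∈ Finset.Icc 1 j, η / (K : ℝ) ^ 2 := by
        apply Finset.sum_le_sum
        intro k hk
        have hk' := Finset.mem_Icc.mp hk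
        exact le_of_lt (hAω k hk'.1 (le_trans hk'.2 hj))
      have hcard : (Finset.Icc 1 j).card = j := by rw [Nat.card_Icc]; omega
      have h3 : ∑ _k ∈ Finset.Icc 1 j, η / (K : ℝ) ^ 2 = (j : ℝ) * (η / (K : ℝ) ^ 2) := by
        rw [Finset.sum_const, hcard, nsmul_eq_mul]
      have hjK : (j : ℝ) ≤ K := by exact_mod_cast hj
      have h4 : (j : ℝ) * (η / (K : ℝ) ^ 2) ≤ (K : ℝ) * (η / (K : ℝ) ^ 2) := by
        apply mul_le_mul_of_nonneg_right hjK
        positivity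
      have h5 : (K : ℝ) * (η / (K : ℝ) ^ 2) = η / K := by
        field_simp
      linarith
    obtain ⟨hc1, hcl, hcu⟩ := hcω
    obtain ⟨hc'1, hc'l, hc'u⟩ := hc'ω
    have hK1 : (1 : ℝ) ≤ K := by exact_mod_cast hK
    have hηK : η / K ≤ η := by
      rw [div_le_iff₀ hK0]
      nlinarith [mul_le_mul_of_nonneg_left hK1 hη.le]
    by_cases hcK : K < c ω
    · -- U ≥ S_{c} ≥ S_K ≥ 1 - η
      refine Or.inl (Or.inr ?_)
      have := hmono K (c ω) (le_of_lt hcK)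
      simp only [hBdef, Set.mem_setOf_eq]
      linarith
    by_cases hc'K : K < c' ω
    · refine Or.inl (Or.inr ?_)
      have h1 : Sx' K ≤ Sx' (c' ω) := hmono' K (c' ω) (le_of_lt hc'K)
      have h2 := hdiff K le_rfl
      rw [abs_le] at h2
      simp only [hBdef, Set.mem_setOf_eq]
      linarith
    push_neg at hcK hc'K
    refine Or.inr ?_
    rcases lt_or_gt_of_ne hne with hlt | hgt
    · -- c < c', take j = c + 1
      refine Set.mem_biUnion (Finset.mem_Icc.mpr ⟨by omega, by omega⟩)
        (show ω ∈ {ω' | |U ω' - ∑ k ∈ Finset.Icc 1 (c ω + 1), x ω' k| ≤ η / K} from ?_)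
      have h1 : Sx' (c ω + 1) ≤ Sx' (c' ω) := hmono' _ _ (by omega)
      have h2 := hdiff (c ω + 1) (by omega)
      rw [abs_le] at h2
      have e1 : Sx (c ω + 1) = ∑ k ∈ Finset.Icc 1 (c ω + 1), x ω k := rfl
      have e2 : Sx' (c' ω) = ∑ k ∈ Finset.Icc 1 (c' ω), x' ω k := rfl
      simp only [Set.mem_setOf_eq]
      rw [abs_le]
      constructor <;> linarith
    · -- c' < c, take j = c' + 1
      refine Set.mem_biUnion (Finset.mem_Icc.mpr ⟨by omega, by omega⟩)
        (show ω ∈ {ω' | |U ω' - ∑ k ∈ Finset.Icc 1 (c' ω + 1), x ω' k| ≤ η / K} from ?_)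
      have h1 : Sx (c' ω + 1) ≤ Sx (c ω) := hmono _ _ (by omega)
      have h2 := hdiff (c' ω + 1) (by omega)
      rw [abs_le] at h2
      have e1 : Sx' (c' ω + 1) = ∑ k ∈ Finset.Icc 1 (c' ω + 1), x' ω k := rfl
      have e2 : Sx (c ω) = ∑ k ∈ Finset.Icc 1 (c ω), x ω k := rfl
      have e3 : Sx (c' ω + 1) = ∑ k ∈ Finset.Icc 1 (c' ω + 1), x ω k := rfl
      simp only [Set.mem_setOf_eq]
      rw [abs_le]
      constructor <;> linarith
  -- measure bounds
  have hK1 : (1 : ℝ) ≤ K := by exact_mod_cast hK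
  have hηK : η / K ≤ η := by
    rw [div_le_iff₀ hK0]
    nlinarith [mul_le_mul_of_nonneg_left hK1 hη.le]
  have hPA : P A ≤ ENNReal.ofReal η := le_trans hclose (ENNReal.ofReal_le_ofReal hηK)
  have hPB : P B ≤ ENNReal.ofReal (2 * η) := by
    have hBpre : B = U ⁻¹' Set.Ici (1 - 2 * η) := rfl
    rw [hBpre, ← Measure.map_apply hUm measurableSet_Ici, hU,
      Measure.restrict_apply measurableSet_Ici]
    calc volume (Set.Ici (1 - 2 * η) ∩ Set.Icc 0 1)
        ≤ volume (Set.Icc (1 - 2 * η) 1) := by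
          apply measure_mono
          rintro u ⟨h1, h2⟩
          exact ⟨h1, h2.2⟩
      _ = ENNReal.ofReal (2 * η) := by rw [Real.volume_Icc]; ring_nf
  have hPC : P C ≤ ENNReal.ofReal (2 * η) := by
    calc P C ≤ ∑ j ∈ Finset.Icc 2 K, P {ω | |U ω - ∑ k ∈ Finset.Icc 1 j, x ω k| ≤ η / K} :=
          measure_biUnion_finset_le _ _
      _ ≤ ∑ _j ∈ Finset.Icc 2 K, ENNReal.ofReal (2 * (η / K)) := by
          apply Finset.sum_le_sum
          intro j _
          have hYm : Measurable (fun ω => ∑ k ∈ Finset.Icc 1 j, x ω k) :=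
            Finset.measurable_sum _ fun k _ => (measurable_pi_apply k).comp hxm
          have hg : Measurable (fun p : (ℕ → ℝ) × (ℕ → ℝ) => ∑ k ∈ Finset.Icc 1 j, p.1 k) :=
            Finset.measurable_sum _ fun k _ => (measurable_pi_apply k).comp measurable_fst
          have hind : ProbabilityTheory.IndepFun (fun ω => ∑ k ∈ Finset.Icc 1 j, x ω k) U P :=
            (hindep.comp measurable_id hg).symm
          exact stmt16_band P U _ hUm hYm hU hind (η / K) (by positivity)
      _ = (Finset.Icc 2 K).card • ENNReal.ofReal (2 * (η / K)) := Finset.sum_const _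
      _ ≤ ENNReal.ofReal (2 * η) := by
          rw [nsmul_eq_mul, Nat.card_Icc]
          rw [← ENNReal.ofReal_natCast, ← ENNReal.ofReal_mul (by positivity)]
          apply ENNReal.ofReal_le_ofReal
          have h1 : ((K + 1 - 2 : ℕ) : ℝ) ≤ (K : ℝ) := by
            have : (K + 1 - 2 : ℕ) ≤ K := by omega
            exact_mod_cast this
          have h2 : (K : ℝ) * (2 * (η / K)) = 2 * η := by field_simp
          nlinarith [mul_le_mul_of_nonneg_right h1 (show (0:ℝ) ≤ 2 * (η / K) by positivity)]
  have hBadm : MeasurableSet {ω | c ω ≠ c' ω} := by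
    have heq : {ω | c ω = c' ω} = ⋃ n : ℕ, c ⁻¹' {n} ∩ c' ⁻¹' {n} := by
      ext ω
      simp only [Set.mem_setOf_eq, Set.mem_iUnion, Set.mem_inter_iff, Set.mem_preimage,
        Set.mem_singleton_iff]
      constructor
      · intro h; exact ⟨c ω, rfl, h.symm⟩
      · rintro ⟨n, h1, h2⟩; rw [h1, h2]
    have : MeasurableSet {ω | c ω = c' ω} := by
      rw [heq]
      exact MeasurableSet.iUnion fun n =>
        (hcm (measurableSet_singleton n)).inter (hc'm (measurableSet_singleton n))
    have h2 : {ω | c ω ≠ c' ω} = {ω | c ω = c' ω}ᶜ := by ext ω; simp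
    rw [h2]; exact this.compl
  have hPne : P {ω | c ω ≠ c' ω} ≤ ENNReal.ofReal (6 * η) := by
    calc P {ω | c ω ≠ c' ω} ≤ P D := measure_mono_ae hsub
      _ ≤ P (A ∪ B) + P C := measure_union_le _ _
      _ ≤ P A + P B + P C := add_le_add_left (measure_union_le _ _) _
      _ ≤ ENNReal.ofReal η + ENNReal.ofReal (2 * η) + ENNReal.ofReal (2 * η) :=
          add_le_add (add_le_add hPA hPB) hPC
      _ ≤ ENNReal.ofReal (6 * η) := by
          rw [← ENNReal.ofReal_add (by positivity) (by positivity),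
            ← ENNReal.ofReal_add (by positivity) (by positivity)]
          exact ENNReal.ofReal_le_ofReal (by linarith)
  have hcompl : {ω | c ω = c' ω} = {ω | c ω ≠ c' ω}ᶜ := by ext ω; simp
  rw [hcompl, prob_compl_eq_one_sub hBadm]
  calc ENNReal.ofReal (1 - 6 * η)
      = ENNReal.ofReal 1 - ENNReal.ofReal (6 * η) := ENNReal.ofReal_sub _ (by positivity)
    _ = 1 - ENNReal.ofReal (6 * η) := by rw [ENNReal.ofReal_one]
    _ ≤ 1 - P {ω | c ω ≠ c' ω} := tsub_le_tsub_left hPne 1
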